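/- Let x* > 1 (or x* < −1). Then for every polynomial p of degree at most m with |p(x)| ≤ 1 for all x ∈ [−1,1], one has |p(x*)| ≤ |T_m(x*)|, where T_m is the Chebyshev polynomial of degree m. -/

import Mathlib

open Polynomial Polynomial.Chebyshev Real Set

private lemma natDegree_T_le' : ∀ n : ℕ, (Polynomial.Chebyshev.T ℝ n).natDegree ≤ n ∧
    (Polynomial.Chebyshev.T ℝ (n+1)).natDegree ≤ n+1 := by
  intro n
  induction n with
  | zero => constructor <;> simp [Polynomial.Chebyshev.T_zero, Polynomial.Chebyshev.T_one,
      Polynomial.natDegree_X_le]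
  | succ k ih =>
    refine ⟨by exact_mod_cast ih.2, ?_⟩
    have h2 : ((k + 1 : ℕ) : ℤ) + 1 = (k : ℤ) + 2 := by push_cast; ring
    rw [h2, Polynomial.Chebyshev.T_add_two]
    refine le_trans (Polynomial.natDegree_sub_le _ _) (max_le ?_ ?_)
    · refine le_trans (Polynomial.natDegree_mul_le) ?_
      have h3 : (2 * Polynomial.X : ℝ[X]).natDegree ≤ 1 :=
        le_trans Polynomial.natDegree_mul_le (by simp)
      have h4 : (Polynomial.Chebyshev.T ℝ ((k:ℤ)+1)).natDegree ≤ k + 1 := by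
        exact_mod_cast ih.2
      omega
    · exact le_trans ih.1 (by omega)

private lemma exists_root_Ioo' {f : ℝ → ℝ} (hf : Continuous f) {a b : ℝ} (hab : a ≤ b)
    (h : f a * f b < 0) : ∃ c ∈ Set.Ioo a b, f c = 0 := by
  rcases lt_or_ge (f a) 0 with ha | ha
  · have hb : 0 < f b := by nlinarith
    obtain ⟨c, hc, hc0⟩ := intermediate_value_Ioo hab hf.continuousOn
      (show (0:ℝ) ∈ Set.Ioo (f a) (f b) from ⟨ha, hb⟩)
    exact ⟨c, hc, hc0⟩
  · have ha' : 0 < f a := lt_of_le_of_ne ha (by intro h'; rw [← h'] at h; simp at h)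
    have hb : f b < 0 := by nlinarith
    obtain ⟨c, hc, hc0⟩ := intermediate_value_Ioo' hab hf.continuousOn
      (show (0:ℝ) ∈ Set.Ioo (f b) (f a) from ⟨hb, ha'⟩)
    exact ⟨c, hc, hc0⟩

/-- Chebyshev extremal growth: if `|p| ≤ 1` on `[-1,1]` and `deg p ≤ m`, then
`|p(x*)| ≤ |T_m(x*)|` for `|x*| > 1`. -/
theorem stmt7 (m : ℕ) (xs : ℝ) (hxs : 1 < |xs|)
    (p : Polynomial ℝ) (hdeg : p.natDegree ≤ m)
    (hp : ∀ x ∈ Set.Icc (-1 : ℝ) 1, |p.eval x| ≤ 1) :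
    |p.eval xs| ≤ |(Polynomial.Chebyshev.T ℝ m).eval xs| := by
  rcases Nat.eq_zero_or_pos m with hm | hm
  · subst hm
    have hp0 := hp 0 (by norm_num)
    have h0 : p.natDegree = 0 := Nat.le_zero.mp hdeg
    obtain ⟨a, rfl⟩ := Polynomial.natDegree_eq_zero.mp h0
    simpa [Polynomial.Chebyshev.T_zero] using hp0
  by_contra hcon
  push_neg at hcon
  have hpxs : p.eval xs ≠ 0 := by
    intro h
    rw [h] at hcon
    simp at hcon
    exact absurd hcon (not_lt.2 (abs_nonneg _))
  set c : ℝ := (Polynomial.Chebyshev.T ℝ m).eval xs / p.eval xs with hc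
  have hc1 : |c| < 1 := by
    rw [hc, abs_div, div_lt_one (abs_pos.2 hpxs)]
    exact hcon
  set q : ℝ[X] := Polynomial.Chebyshev.T ℝ m - Polynomial.C c * p with hq
  have hqdeg : q.natDegree ≤ m := by
    refine le_trans (Polynomial.natDegree_sub_le _ _) (max_le (natDegree_T_le' m).1 ?_)
    exact le_trans Polynomial.natDegree_mul_le (by simp [hdeg])
  have hqxs : q.eval xs = 0 := by
    simp only [hq, Polynomial.eval_sub, Polynomial.eval_mul, Polynomial.eval_C, hc]
    field_simp
    ring
  set nd : ℕ → ℝ := fun k => Real.cos (k * π / m) with hnd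
  have hmpos : (0:ℝ) < m := by exact_mod_cast hm
  have hθmem : ∀ k, k ≤ m → (k * π / m : ℝ) ∈ Set.Icc 0 π := by
    intro k hk
    constructor
    · positivity
    · rw [div_le_iff₀ hmpos]
      have : (k:ℝ) ≤ m := by exact_mod_cast hk
      nlinarith [pi_pos]
  have hanti : ∀ j k, j < k → k ≤ m → nd k < nd j := by
    intro j k hjk hk
    refine Real.strictAntiOn_cos (hθmem j (by omega)) (hθmem k hk) ?_
    have hjk' : (j:ℝ) < k := by exact_mod_cast hjk
    have := pi_pos
    gcongr
  have hantile : ∀ j k, j ≤ k → k ≤ m → nd k ≤ nd j := by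
    intro j k hjk hk
    rcases hjk.lt_or_eq with h | h
    · exact (hanti j k h hk).le
    · subst h; exact le_refl _
  have hsign : ∀ k, k ≤ m → 0 < (-1:ℝ)^k * q.eval (nd k) := by
    intro k hk
    have hT : (Polynomial.Chebyshev.T ℝ (m:ℤ)).eval (nd k) = (-1:ℝ)^k := by
      simp only [hnd]
      rw [Polynomial.Chebyshev.T_real_cos]
      have hm' : (m:ℝ) ≠ 0 := ne_of_gt hmpos
      have he : ((m:ℤ):ℝ) * ((k:ℝ) * π / m) = 0 + (k:ℕ) * π := by
        push_cast; field_simp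
        ring
      rw [he, Real.cos_add_nat_mul_pi]
      simp
    have hpk : |p.eval (nd k)| ≤ 1 :=
      hp _ ⟨Real.neg_one_le_cos _, Real.cos_le_one _⟩
    have hqe : q.eval (nd k) = (-1:ℝ)^k - c * p.eval (nd k) := by
      simp [hq, hT]
    rw [hqe]
    have habs : |c * p.eval (nd k)| < 1 := by
      rw [abs_mul]
      nlinarith [abs_nonneg c, abs_nonneg (p.eval (nd k))]
    have h1 := abs_lt.mp habs
    rcases Nat.even_or_odd k with he | ho
    · rw [he.neg_one_pow]; nlinarith [h1.1, h1.2]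
    · rw [ho.neg_one_pow]; nlinarith [h1.1, h1.2]
  have hcontq : Continuous fun x : ℝ => q.eval x := q.continuous
  have hroot : ∀ k, k < m → ∃ r ∈ Set.Ioo (nd (k+1)) (nd k), q.eval r = 0 := by
    intro k hk
    apply exists_root_Ioo' hcontq (hanti k (k+1) (by omega) (by omega)).le
    have h1 := hsign k (by omega)
    have h2 := hsign (k+1) (by omega)
    rcases Nat.even_or_odd k with he | ho
    · rw [he.neg_one_pow] at h1
      rw [pow_succ, he.neg_one_pow] at h2
      nlinarith
    · rw [ho.neg_one_pow] at h1
      rw [pow_succ, ho.neg_one_pow] at h2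
      nlinarith
  choose r hrmem hrzero using hroot
  have hrIoo : ∀ k (hk : k < m), r k hk ∈ Set.Ioo (-1:ℝ) 1 := by
    intro k hk
    have h1 := (hrmem k hk).1
    have h2 := (hrmem k hk).2
    simp only [hnd] at h1 h2
    constructor
    · linarith [Real.neg_one_le_cos (((k:ℕ)+1:ℕ) * π / m)]
    · linarith [Real.cos_le_one ((k:ℝ) * π / m)]
  have hrlt : ∀ i j (hi : i < m) (hj : j < m), i < j → r j hj < r i hi := by
    intro i j hi hj hij
    have h1 := (hrmem j hj).2
    have h2 := hantile (i+1) j (by omega) (by omega)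
    have h3 := (hrmem i hi).1
    linarith
  have hxs' : ∀ k (hk : k < m), r k hk ≠ xs := by
    intro k hk h
    have hr := hrIoo k hk
    rcases lt_abs.mp hxs with h' | h' <;> rw [h] at hr <;>
      [linarith [hr.2]; linarith [hr.1]]
  set g : Fin (m+1) → ℝ := fun i => if h : (i : ℕ) < m then r i h else xs with hg
  have key : ∀ a b : Fin (m+1), (a:ℕ) < (b:ℕ) → g a ≠ g b := by
    intro a b hab heq
    simp only [hg] at heq
    by_cases hb : (b:ℕ) < m
    · have ha : (a:ℕ) < m := lt_trans hab hb
      rw [dif_pos ha, dif_pos hb] at heq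
      exact absurd heq (hrlt a b ha hb hab).ne'
    · have ha : (a:ℕ) < m := by omega
      rw [dif_pos ha, dif_neg hb] at heq
      exact hxs' a ha heq
  have hginj : Function.Injective g := by
    intro a b h
    rcases lt_trichotomy (a:ℕ) (b:ℕ) with h' | h' | h'
    · exact absurd h (key a b h')
    · exact Fin.ext h'
    · exact absurd h.symm (key b a h')
  have hgzero : ∀ i, q.eval (g i) = 0 := by
    intro i
    simp only [hg]
    by_cases h : (i:ℕ) < m
    · rw [dif_pos h]; exact hrzero i h
    · rw [dif_neg h]; exact hqxs
  have hq0 : q = 0 :=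
    Polynomial.eq_zero_of_natDegree_lt_card_of_eval_eq_zero q hginj hgzero
      (by simpa using Nat.lt_succ_of_le hqdeg)
  have h0 := hsign 0 (Nat.zero_le _)
  rw [hq0] at h0
  simp at h0
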